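/- Let H be symmetric positive semidefinite, g ∈ ℝⁿ, and define ψ(σ) = (1/σ)‖(H + σI)^{-1}g‖ for σ > 0. Then for 0 < σ ≤ σ̄: (σ/σ̄)² ψ(σ) ≤ ψ(σ̄) ≤ (σ/σ̄) ψ(σ). -/

import Mathlib

open Real Matrix

lemma aux_inner14 {n : ℕ} (x y : Fin n → ℝ) :
    (inner ℝ ((WithLp.equiv 2 (Fin n → ℝ)).symm x) ((WithLp.equiv 2 (Fin n → ℝ)).symm y) : ℝ)
      = x ⬝ᵥ y := by
  simp [PiLp.inner_apply, dotProduct, mul_comm]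

/-- For `H ⪰ 0` symmetric and `ψ(σ) = (1/σ)‖(H+σI)⁻¹g‖`, if `0 < σ ≤ σ̄` then
`(σ/σ̄)² ψ(σ) ≤ ψ(σ̄) ≤ (σ/σ̄) ψ(σ)`. -/
theorem stmt14 {n : ℕ} (H : Matrix (Fin n) (Fin n) ℝ) (g : Fin n → ℝ) (σ σbar : ℝ)
    (hH : H.PosSemidef) (hσ : 0 < σ) (hσσ : σ ≤ σbar) :
    (σ / σbar) ^ 2 * (1 / σ * ‖(WithLp.equiv 2 (Fin n → ℝ)).symm ((H + σ • 1)⁻¹.mulVec g)‖)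
        ≤ 1 / σbar * ‖(WithLp.equiv 2 (Fin n → ℝ)).symm ((H + σbar • 1)⁻¹.mulVec g)‖ ∧
    1 / σbar * ‖(WithLp.equiv 2 (Fin n → ℝ)).symm ((H + σbar • 1)⁻¹.mulVec g)‖
        ≤ σ / σbar * (1 / σ * ‖(WithLp.equiv 2 (Fin n → ℝ)).symm ((H + σ • 1)⁻¹.mulVec g)‖) := by
  have hσb : 0 < σbar := hσ.trans_le hσσ
  have hc : (0:ℝ) ≤ σbar - σ := by linarith
  have hsmul : ∀ t : ℝ, 0 < t → ((t • (1 : Matrix (Fin n) (Fin n) ℝ))).PosDef := fun t ht => by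
    rw [Matrix.smul_one_eq_diagonal]
    exact Matrix.posDef_diagonal_iff.mpr fun _ => ht
  set e := (WithLp.equiv 2 (Fin n → ℝ)).symm with he
  set A := H + σ • (1 : Matrix (Fin n) (Fin n) ℝ) with hAdef
  set B := H + σbar • (1 : Matrix (Fin n) (Fin n) ℝ) with hBdef
  have hA : A.PosDef := Matrix.PosDef.posSemidef_add hH (hsmul σ hσ)
  have hB : B.PosDef := Matrix.PosDef.posSemidef_add hH (hsmul σbar hσb)
  have hAdet : IsUnit A.det := isUnit_iff_ne_zero.mpr hA.det_pos.ne'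
  have hBdet : IsUnit B.det := isUnit_iff_ne_zero.mpr hB.det_pos.ne'
  set c := σbar - σ with hcdef
  have hBA : B = A + c • (1 : Matrix (Fin n) (Fin n) ℝ) := by
    have h1 : σ + c = σbar := by rw [hcdef]; ring
    rw [hAdef, hBdef, add_assoc, ← add_smul, h1]
  have hAi : A⁻¹.PosSemidef := hA.inv.posSemidef
  clear_value A B c
  set u := B⁻¹.mulVec g with hu
  set v := A⁻¹.mulVec g with hv
  set w := A⁻¹.mulVec u with hw
  clear_value u v w
  have hmv : ∀ x : Fin n → ℝ, A.mulVec (A⁻¹.mulVec x) = x := fun x => by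
    rw [Matrix.mulVec_mulVec, Matrix.mul_nonsing_inv _ hAdet, Matrix.one_mulVec]
  have hBu : B.mulVec u = g := by
    rw [hu, Matrix.mulVec_mulVec, Matrix.mul_nonsing_inv _ hBdet, Matrix.one_mulVec]
  -- key relation: v = u + c • w
  have hveq : v = u + c • w := by
    have h1 : A.mulVec (u + c • w) = g := by
      rw [Matrix.mulVec_add, Matrix.mulVec_smul, hw, hmv, ← hBu, hBA, Matrix.add_mulVec,
        Matrix.smul_mulVec, Matrix.one_mulVec]
    calc v = A⁻¹.mulVec (A.mulVec (u + c • w)) := by rw [h1, hv]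
      _ = u + c • w := by
          rw [Matrix.mulVec_mulVec, Matrix.nonsing_inv_mul _ hAdet, Matrix.one_mulVec]
  -- bound ‖A⁻¹ x‖ ≤ (1/σ) ‖x‖
  have key : ∀ x : Fin n → ℝ, σ * ‖e (A⁻¹.mulVec x)‖ ≤ ‖e x‖ := by
    intro x
    set y := A⁻¹.mulVec x with hy
    clear_value y
    have hxy : A.mulVec y = x := by rw [hy]; exact hmv x
    have hHy : 0 ≤ y ⬝ᵥ H.mulVec y := by simpa using hH.dotProduct_mulVec_nonneg y
    have h1 : σ * (y ⬝ᵥ y) ≤ x ⬝ᵥ y := by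
      have hx1 : x ⬝ᵥ y = (H.mulVec y) ⬝ᵥ y + σ * (y ⬝ᵥ y) := by
        rw [← hxy, hAdef, Matrix.add_mulVec, Matrix.smul_mulVec, Matrix.one_mulVec,
          add_dotProduct, smul_dotProduct, smul_eq_mul]
      have hcomm : (H.mulVec y) ⬝ᵥ y = y ⬝ᵥ H.mulVec y := dotProduct_comm _ _
      linarith
    have hn : ‖e y‖ ^ 2 = y ⬝ᵥ y := by
      rw [he, ← aux_inner14]
      exact (real_inner_self_eq_norm_sq _).symm
    have h2 : σ * ‖e y‖ ^ 2 ≤ ‖e x‖ * ‖e y‖ := by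
      have h3 := real_inner_le_norm (e x) (e y)
      rw [he, aux_inner14] at h3
      rw [hn]
      linarith
    rcases (norm_nonneg (e y)).eq_or_lt with h | h
    · rw [← h]; simpa using norm_nonneg (e x)
    · nlinarith
  -- inner product nonnegativity
  have hinner : (0:ℝ) ≤ inner ℝ (e u) (e w) := by
    rw [he, aux_inner14, hw]
    simpa using hAi.dotProduct_mulVec_nonneg u
  have hsplit : e (u + c • w) = e u + c • e w := rfl
  -- ‖u‖ ≤ ‖v‖
  have hVsq : ‖e v‖ ^ 2 = ‖e u‖ ^ 2 + 2 * (c * inner ℝ (e u) (e w)) + c ^ 2 * ‖e w‖ ^ 2 := by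
    rw [hveq, hsplit, norm_add_sq_real, real_inner_smul_right, norm_smul, Real.norm_eq_abs,
      mul_pow, sq_abs]
  have hUV : ‖e u‖ ≤ ‖e v‖ := by
    have hcc : (0:ℝ) ≤ c := hc
    have hsq : ‖e u‖ ^ 2 ≤ ‖e v‖ ^ 2 := by nlinarith [sq_nonneg c, sq_nonneg ‖e w‖]
    have h := Real.sqrt_le_sqrt hsq
    rwa [Real.sqrt_sq (norm_nonneg _), Real.sqrt_sq (norm_nonneg _)] at h
  -- σ ‖v‖ ≤ σbar ‖u‖
  have hWU : σ * ‖e w‖ ≤ ‖e u‖ := by rw [hw]; exact key u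
  have htri : ‖e v‖ ≤ ‖e u‖ + c * ‖e w‖ := by
    rw [hveq, hsplit]
    calc ‖e u + c • e w‖ ≤ ‖e u‖ + ‖c • e w‖ := norm_add_le _ _
      _ = ‖e u‖ + c * ‖e w‖ := by rw [norm_smul, Real.norm_eq_abs, abs_of_nonneg hc]
  have hσV : σ * ‖e v‖ ≤ σbar * ‖e u‖ := by
    have h1 := mul_le_mul_of_nonneg_left htri hσ.le
    have h2 := mul_le_mul_of_nonneg_left hWU hc
    rw [hcdef] at h1 h2
    nlinarith
  constructor
  · have e1 : (σ / σbar) ^ 2 * (1 / σ * ‖e v‖) = σ * ‖e v‖ / σbar ^ 2 := by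
      field_simp
    have e2 : 1 / σbar * ‖e u‖ = σbar * ‖e u‖ / σbar ^ 2 := by
      field_simp
    rw [e1, e2]
    gcongr
  · have e3 : σ / σbar * (1 / σ * ‖e v‖) = 1 / σbar * ‖e v‖ := by
      field_simp
    rw [e3]
    gcongr
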